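/- arXiv:2211.04400 — 3 statements merged into one kernel-verified Lean document; each statement's English description precedes it below -/
import Mathlib

section
/- Let χ be an N×N Hermitian complex matrix. Among all positive semidefinite N×N matrices P, the Frobenius-norm distance ‖χ − P‖_F is minimized uniquely by χ⁺ = (χ + √(χ†χ))/2, the matrix obtained from χ by replacing all negative eigenvalues with zero. -/
open Matrix
open scoped ComplexOrder

/-- Frobenius norm of a complex matrix: `‖X‖_F = √(Tr (Xᴴ X))`. -/
noncomputable def frobNorm {N : ℕ} (X : Matrix (Fin N) (Fin N) ℂ) : ℝ :=
  Real.sqrt ((Xᴴ * X).trace.re)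

/-- The square root of a positive semidefinite matrix (as `Matrix.PosSemidef.sqrt` was defined in
Mathlib of December 2024). -/
noncomputable def Matrix.PosSemidef.sqrt {n : Type*} [Fintype n] [DecidableEq n] {𝕜 : Type*} [RCLike 𝕜]
    {A : Matrix n n 𝕜} (hA : A.PosSemidef) : Matrix n n 𝕜 :=
  hA.1.eigenvectorUnitary.1 * diagonal ((↑) ∘ (√·) ∘ hA.1.eigenvalues) *
    (star hA.1.eigenvectorUnitary : Matrix n n 𝕜)

section SqrtAux

open scoped MatrixOrder

variable {N : ℕ}

lemma Matrix.PosSemidef.sqrt_eq_CFC {A : Matrix (Fin N) (Fin N) ℂ} (hA : A.PosSemidef) :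
    hA.sqrt = CFC.sqrt A := by
  have h1 : hA.sqrt = hA.1.cfc Real.sqrt := by
    rw [Matrix.PosSemidef.sqrt, Matrix.IsHermitian.cfc, Unitary.conjStarAlgAut_apply]
  rw [h1, ← hA.1.cfc_eq, CFC.sqrt_eq_real_sqrt A hA.nonneg, cfcₙ_eq_cfc]

lemma Matrix.PosSemidef.posSemidef_sqrt {A : Matrix (Fin N) (Fin N) ℂ} (hA : A.PosSemidef) :
    hA.sqrt.PosSemidef := by
  rw [hA.sqrt_eq_CFC]
  exact Matrix.nonneg_iff_posSemidef.mp (CFC.sqrt_nonneg A)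

lemma Matrix.PosSemidef.sqrt_mul_self {A : Matrix (Fin N) (Fin N) ℂ} (hA : A.PosSemidef) :
    hA.sqrt * hA.sqrt = A := by
  rw [hA.sqrt_eq_CFC]
  exact CFC.sqrt_mul_sqrt_self A hA.nonneg

lemma Matrix.PosSemidef.eq_sqrt_of_sq_eq {A B : Matrix (Fin N) (Fin N) ℂ} (hB : B.PosSemidef)
    (hA : A.PosSemidef) (h : B ^ 2 = A) : B = hA.sqrt := by
  rw [hA.sqrt_eq_CFC]
  exact (CFC.sqrt_unique (by rw [← pow_two]; exact h) hB.nonneg).symm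

end SqrtAux

/-- The positive part of a matrix χ, i.e. `(χ + √(χᴴχ))/2`. -/
noncomputable def matPosPart {N : ℕ} (χ : Matrix (Fin N) (Fin N) ℂ) : Matrix (Fin N) (Fin N) ℂ :=
  (2 : ℂ)⁻¹ • (χ + Matrix.PosSemidef.sqrt (Matrix.posSemidef_conjTranspose_mul_self χ))

section Aux

variable {N : ℕ} {χ : Matrix (Fin N) (Fin N) ℂ}

lemma myCfc_mul (hχ : χ.IsHermitian) (f g : ℝ → ℝ) :
    hχ.cfc f * hχ.cfc g = hχ.cfc (fun x => f x * g x) := by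
  have h1 : (star (hχ.eigenvectorUnitary : Matrix (Fin N) (Fin N) ℂ)) *
      (hχ.eigenvectorUnitary : Matrix (Fin N) (Fin N) ℂ) = 1 :=
    mem_unitaryGroup_iff'.mp (hχ.eigenvectorUnitary).2
  have hd : diagonal (RCLike.ofReal ∘ f ∘ hχ.eigenvalues : Fin N → ℂ) *
      diagonal (RCLike.ofReal ∘ g ∘ hχ.eigenvalues) =
      diagonal (RCLike.ofReal ∘ (fun x => f x * g x) ∘ hχ.eigenvalues : Fin N → ℂ) := by
    rw [diagonal_mul_diagonal]
    funext i
    simp [Function.comp_def]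
  simp only [Matrix.IsHermitian.cfc, Unitary.conjStarAlgAut_apply]
  simp only [← Matrix.mul_assoc]
  rw [Matrix.mul_assoc _ (star (hχ.eigenvectorUnitary : Matrix (Fin N) (Fin N) ℂ))
    (hχ.eigenvectorUnitary : Matrix (Fin N) (Fin N) ℂ), h1, mul_one,
    Matrix.mul_assoc _ (diagonal _) (diagonal _), hd]

lemma myCfc_add (hχ : χ.IsHermitian) (f g : ℝ → ℝ) :
    hχ.cfc f + hχ.cfc g = hχ.cfc (fun x => f x + g x) := by
  have hd : diagonal (RCLike.ofReal ∘ f ∘ hχ.eigenvalues) +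
      diagonal (RCLike.ofReal ∘ g ∘ hχ.eigenvalues) =
      diagonal (RCLike.ofReal ∘ (fun x => f x + g x) ∘ hχ.eigenvalues : Fin N → ℂ) := by
    rw [diagonal_add]
    funext i
    simp [Function.comp_def]
  simp only [Matrix.IsHermitian.cfc, Unitary.conjStarAlgAut_apply]
  rw [← Matrix.add_mul, ← Matrix.mul_add, hd]

lemma myCfc_sub (hχ : χ.IsHermitian) (f g : ℝ → ℝ) :
    hχ.cfc f - hχ.cfc g = hχ.cfc (fun x => f x - g x) := by
  have hd : diagonal (RCLike.ofReal ∘ f ∘ hχ.eigenvalues) -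
      diagonal (RCLike.ofReal ∘ g ∘ hχ.eigenvalues) =
      diagonal (RCLike.ofReal ∘ (fun x => f x - g x) ∘ hχ.eigenvalues : Fin N → ℂ) := by
    rw [diagonal_sub]
    funext i
    simp [Function.comp_def]
  simp only [Matrix.IsHermitian.cfc, Unitary.conjStarAlgAut_apply]
  rw [← Matrix.sub_mul, ← Matrix.mul_sub, hd]

lemma myCfc_id (hχ : χ.IsHermitian) : hχ.cfc (fun x => x) = χ := by
  simp only [Matrix.IsHermitian.cfc]
  exact hχ.spectral_theorem.symm

lemma myCfc_zero (hχ : χ.IsHermitian) : hχ.cfc (fun _ => (0 : ℝ)) = 0 := by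
  simp [Matrix.IsHermitian.cfc, Function.comp_def]

lemma myCfc_posSemidef (hχ : χ.IsHermitian) (f : ℝ → ℝ) (hf : ∀ x, 0 ≤ f x) :
    (hχ.cfc f).PosSemidef := by
  simp only [Matrix.IsHermitian.cfc, Matrix.star_eq_conjTranspose]
  exact (posSemidef_diagonal_iff.mpr fun i => by
    simpa using Complex.zero_le_real.mpr (hf _)).mul_mul_conjTranspose_same _

lemma myTrace_eq (X : Matrix (Fin N) (Fin N) ℂ) :
    (Xᴴ * X).trace.re = ∑ i, ∑ j, Complex.normSq (X j i) := by
  have h : (Xᴴ * X).trace = ((∑ i, ∑ j, Complex.normSq (X j i) : ℝ) : ℂ) := by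
    simp only [Matrix.trace, Matrix.diag, Matrix.mul_apply, Matrix.conjTranspose_apply,
      Complex.star_def, ← Complex.normSq_eq_conj_mul_self]
    push_cast
    rfl
  rw [h, Complex.ofReal_re]

lemma myTrace_nonneg (X : Matrix (Fin N) (Fin N) ℂ) : 0 ≤ (Xᴴ * X).trace.re := by
  rw [myTrace_eq]
  exact Finset.sum_nonneg fun i _ => Finset.sum_nonneg fun j _ => Complex.normSq_nonneg _

lemma myTrace_eq_zero (X : Matrix (Fin N) (Fin N) ℂ) (h : (Xᴴ * X).trace.re = 0) : X = 0 := by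
  rw [myTrace_eq] at h
  ext i j
  have h1 := (Finset.sum_eq_zero_iff_of_nonneg (fun i _ => Finset.sum_nonneg
    fun j _ => Complex.normSq_nonneg _)).mp h j (Finset.mem_univ j)
  have h2 := (Finset.sum_eq_zero_iff_of_nonneg (fun j _ => Complex.normSq_nonneg _)).mp h1
    i (Finset.mem_univ i)
  simpa using Complex.normSq_eq_zero.mp h2

lemma myTrace_mul_psd_nonneg {A B : Matrix (Fin N) (Fin N) ℂ}
    (hA : A.PosSemidef) (hB : B.PosSemidef) : 0 ≤ (A * B).trace.re := by
  have key : (A * B).trace = ((hB.sqrt * hA.sqrt)ᴴ * (hB.sqrt * hA.sqrt)).trace := by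
    rw [conjTranspose_mul, hA.posSemidef_sqrt.1, hB.posSemidef_sqrt.1]
    conv_lhs => rw [← hA.sqrt_mul_self, ← hB.sqrt_mul_self]
    rw [show hA.sqrt * hA.sqrt * (hB.sqrt * hB.sqrt) =
        hA.sqrt * (hA.sqrt * hB.sqrt * hB.sqrt) from by
          rw [Matrix.mul_assoc, ← Matrix.mul_assoc hA.sqrt hB.sqrt hB.sqrt],
      show hA.sqrt * hB.sqrt * (hB.sqrt * hA.sqrt) =
        (hA.sqrt * hB.sqrt * hB.sqrt) * hA.sqrt from by rw [← Matrix.mul_assoc],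
      Matrix.trace_mul_comm]
  rw [key]
  exact myTrace_nonneg _

lemma mySqrt_eq (hχ : χ.IsHermitian) :
    (Matrix.posSemidef_conjTranspose_mul_self χ).sqrt = hχ.cfc (fun x => |x|) := by
  refine ((myCfc_posSemidef hχ _ fun x => abs_nonneg x).eq_sqrt_of_sq_eq
    (Matrix.posSemidef_conjTranspose_mul_self χ) ?_).symm
  rw [pow_two, myCfc_mul, hχ.eq]
  have : (fun x : ℝ => |x| * |x|) = fun x : ℝ => x * x := by
    funext x; exact abs_mul_abs_self x
  rw [this, ← myCfc_mul hχ (fun x => x) (fun x => x), myCfc_id]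

lemma myPos_sub_neg (hχ : χ.IsHermitian) :
    hχ.cfc (fun x => max x 0) - hχ.cfc (fun x => max (-x) 0) = χ := by
  rw [myCfc_sub]
  have : (fun x : ℝ => max x 0 - max (-x) 0) = fun x : ℝ => x := by
    funext x
    rcases le_total 0 x with h | h
    · rw [max_eq_left h, max_eq_right (neg_nonpos.mpr h), sub_zero]
    · rw [max_eq_right h, max_eq_left (neg_nonneg.mpr h), zero_sub, neg_neg]
  rw [this, myCfc_id]

lemma myPosPart_eq (hχ : χ.IsHermitian) :
    matPosPart χ = hχ.cfc (fun x => max x 0) := by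
  have habs : hχ.cfc (fun x => max x 0) + hχ.cfc (fun x => max (-x) 0) =
      hχ.cfc (fun x => |x|) := by
    rw [myCfc_add]
    refine congrArg _ (funext fun x => ?_)
    rcases le_total 0 x with h | h
    · rw [max_eq_left h, max_eq_right (neg_nonpos.mpr h), add_zero, abs_of_nonneg h]
    · rw [max_eq_right h, max_eq_left (neg_nonneg.mpr h), zero_add, abs_of_nonpos h]
  have hid := myPos_sub_neg hχ
  rw [matPosPart, mySqrt_eq hχ, ← habs]
  set Q := hχ.cfc (fun x => max x 0)
  set M := hχ.cfc (fun x => max (-x) 0)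
  rw [← hid]
  module

end Aux

/-- Among all positive semidefinite matrices `P`, the Frobenius distance `‖χ − P‖_F` is
minimized uniquely by `χ⁺ = (χ + √(χᴴχ))/2`. -/
theorem stmt_0 {N : ℕ} (χ : Matrix (Fin N) (Fin N) ℂ) (hχ : χ.IsHermitian) :
    (matPosPart χ).PosSemidef ∧
    (∀ P : Matrix (Fin N) (Fin N) ℂ, P.PosSemidef →
      frobNorm (χ - matPosPart χ) ≤ frobNorm (χ - P) ∧
      (frobNorm (χ - P) = frobNorm (χ - matPosPart χ) → P = matPosPart χ)) := by
  have hPP : matPosPart χ = hχ.cfc (fun x => max x 0) := myPosPart_eq hχ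
  set Q := hχ.cfc (fun x => max x 0) with hQdef
  set M := hχ.cfc (fun x => max (-x) 0) with hMdef
  have hsub : Q - M = χ := myPos_sub_neg hχ
  have hQpsd : Q.PosSemidef := myCfc_posSemidef hχ _ (fun x => le_max_right x 0)
  have hMpsd : M.PosSemidef := myCfc_posSemidef hχ _ (fun x => le_max_right _ 0)
  have hQM : Q * M = 0 := by
    rw [hQdef, hMdef, myCfc_mul]
    have : (fun x : ℝ => max x 0 * max (-x) 0) = fun _ => (0 : ℝ) := by
      funext x
      rcases le_total 0 x with h | h
      · rw [max_eq_right (neg_nonpos.mpr h), mul_zero]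
      · rw [max_eq_right h, zero_mul]
    rw [this, myCfc_zero]
  have hMQ : M * Q = 0 := by
    rw [hQdef, hMdef, myCfc_mul]
    have : (fun x : ℝ => max (-x) 0 * max x 0) = fun _ => (0 : ℝ) := by
      funext x
      rcases le_total 0 x with h | h
      · rw [max_eq_right (neg_nonpos.mpr h), zero_mul]
      · rw [max_eq_right h, mul_zero]
    rw [this, myCfc_zero]
  have base : ((χ - matPosPart χ)ᴴ * (χ - matPosPart χ)).trace.re = (Mᴴ * M).trace.re := by
    rw [hPP, show χ - Q = -M from by rw [← hsub]; abel, conjTranspose_neg,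
      Matrix.neg_mul, Matrix.mul_neg, neg_neg]
  have n4 : 0 ≤ (Mᴴ * M).trace.re := myTrace_nonneg M
  refine ⟨hPP ▸ hQpsd, fun P hP => ?_⟩
  have hEherm : (Q - P)ᴴ = Q - P := (hQpsd.1.sub hP.1)
  have hDherm : (χ - P)ᴴ = χ - P := (hχ.sub hP.1)
  have hmat : (χ - P)ᴴ * (χ - P) =
      (Q - P)ᴴ * (Q - P) + (P * M + (M * P + Mᴴ * M)) := by
    rw [hDherm, hEherm, hMpsd.1]
    rw [show χ - P = (Q - P) - M from by rw [← hsub]; abel]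
    have expand : ((Q - P) - M) * ((Q - P) - M) =
        (Q - P) * (Q - P) - (Q * M - P * M) - (M * Q - M * P) + M * M := by
      noncomm_ring
    rw [expand, hQM, hMQ]
    abel
  have htr : ((χ - P)ᴴ * (χ - P)).trace.re =
      ((Q - P)ᴴ * (Q - P)).trace.re +
        ((P * M).trace.re + ((M * P).trace.re + (Mᴴ * M).trace.re)) := by
    rw [hmat]
    simp [Matrix.trace_add, Complex.add_re]
  have n1 : 0 ≤ ((Q - P)ᴴ * (Q - P)).trace.re := myTrace_nonneg _
  have n2 : 0 ≤ (P * M).trace.re := myTrace_mul_psd_nonneg hP hMpsd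
  have n3 : 0 ≤ (M * P).trace.re := myTrace_mul_psd_nonneg hMpsd hP
  constructor
  · apply Real.sqrt_le_sqrt
    rw [base, htr]
    linarith
  · intro heq
    have h1 : ((χ - P)ᴴ * (χ - P)).trace.re =
        ((χ - matPosPart χ)ᴴ * (χ - matPosPart χ)).trace.re :=
      (Real.sqrt_inj (myTrace_nonneg _) (myTrace_nonneg _)).mp heq
    rw [base, htr] at h1
    have hz : ((Q - P)ᴴ * (Q - P)).trace.re = 0 := by linarith
    have h0 : Q - P = 0 := myTrace_eq_zero _ hz
    rw [hPP]
    exact (sub_eq_zero.mp h0).symm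
end

section
/- Let A, G ∈ ℂ^n be linearly independent with λ₊ = Re⟨G,A⟩ + √(‖G‖²‖A‖² − (Im⟨G,A⟩)²) > 0. Then the vector v = (λ₊ − ⟨G,A⟩)G + ‖G‖²A is an eigenvector of χ = |A⟩⟨G| + |G⟩⟨A| with eigenvalue λ₊, and ‖v‖² = 2λ₊‖G‖²·√(‖G‖²‖A‖² − (Im⟨G,A⟩)²). -/
open Matrix

/-- Standard Hermitian inner product on ℂ^n, antilinear in the first argument. -/
noncomputable def cip {n : ℕ} (x y : Fin n → ℂ) : ℂ := ∑ i, star (x i) * y i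

/-- The matrix `χ = |A⟩⟨G| + |G⟩⟨A|`. -/
noncomputable def dyadSum {n : ℕ} (A G : Fin n → ℂ) : Matrix (Fin n) (Fin n) ℂ :=
  Matrix.of fun i j => A i * star (G j) + G i * star (A j)

lemma cip_add_right {n : ℕ} (x y z : Fin n → ℂ) : cip x (y + z) = cip x y + cip x z := by
  simp [cip, mul_add, Finset.sum_add_distrib]

lemma cip_smul_right {n : ℕ} (c : ℂ) (x y : Fin n → ℂ) : cip x (c • y) = c * cip x y := by
  simp [cip, Finset.mul_sum, mul_left_comm]

lemma cip_add_left {n : ℕ} (x y z : Fin n → ℂ) : cip (x + y) z = cip x z + cip y z := by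
  simp [cip, add_mul, Finset.sum_add_distrib]

lemma cip_smul_left {n : ℕ} (c : ℂ) (x y : Fin n → ℂ) : cip (c • x) y = star c * cip x y := by
  simp [cip, Finset.mul_sum, star_mul', mul_assoc]

lemma cip_self_real {n : ℕ} (x : Fin n → ℂ) : cip x x = ((cip x x).re : ℂ) := by
  apply Complex.ext
  · simp
  · simp [cip, Complex.im_sum]
    apply Finset.sum_eq_zero
    intro i _
    ring

lemma cip_star {n : ℕ} (x y : Fin n → ℂ) : star (cip x y) = cip y x := by
  simp [cip, star_sum, star_mul', mul_comm]

lemma cip_inner {n : ℕ} (x y : Fin n → ℂ) :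
    (inner ℂ ((WithLp.equiv 2 (Fin n → ℂ)).symm x) ((WithLp.equiv 2 _).symm y) : ℂ) = cip x y := by
  simp [PiLp.inner_apply, RCLike.inner_apply, cip, Complex.star_def, mul_comm]

lemma cip_CS {n : ℕ} (x y : Fin n → ℂ) :
    Complex.normSq (cip x y) ≤ (cip x x).re * (cip y y).re := by
  have h := @norm_inner_le_norm ℂ (EuclideanSpace ℂ (Fin n)) _ _ _
    ((WithLp.equiv 2 _).symm x) ((WithLp.equiv 2 _).symm y)
  rw [cip_inner] at h
  have hx : (cip x x).re = ‖(WithLp.equiv 2 (Fin n → ℂ)).symm x‖ ^ 2 := by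
    rw [← cip_inner x x]; exact (InnerProductSpace.norm_sq_eq_re_inner (𝕜 := ℂ) _).symm
  have hy : (cip y y).re = ‖(WithLp.equiv 2 (Fin n → ℂ)).symm y‖ ^ 2 := by
    rw [← cip_inner y y]; exact (InnerProductSpace.norm_sq_eq_re_inner (𝕜 := ℂ) _).symm
  rw [hx, hy, ← Complex.sq_norm]
  calc ‖cip x y‖ ^ 2 ≤ (‖(WithLp.equiv 2 (Fin n → ℂ)).symm x‖ * ‖(WithLp.equiv 2 (Fin n → ℂ)).symm y‖)^2 := by
        apply sq_le_sq' <;> [nlinarith [norm_nonneg (cip x y), norm_nonneg ((WithLp.equiv 2 (Fin n → ℂ)).symm x), norm_nonneg ((WithLp.equiv 2 (Fin n → ℂ)).symm y)]; exact h]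
    _ = _ := by ring

lemma dyad_mulVec {n : ℕ} (A G v : Fin n → ℂ) :
    (dyadSum A G).mulVec v = (cip G v) • A + (cip A v) • G := by
  funext i
  simp only [dyadSum, mulVec, dotProduct, Matrix.of_apply, Pi.add_apply, Pi.smul_apply,
    smul_eq_mul, cip, Finset.mul_sum, ← Finset.sum_add_distrib]
  rw [Finset.sum_mul, Finset.sum_mul, ← Finset.sum_add_distrib]
  exact Finset.sum_congr rfl fun j _ => by ring

/-- For linearly independent `A, G` with `λ₊ > 0`, the vector
`v = (λ₊ − ⟨G,A⟩)G + ‖G‖²A` is an eigenvector of `χ = |A⟩⟨G| + |G⟩⟨A|` with eigenvalue `λ₊`,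
and `‖v‖² = 2λ₊‖G‖²√(‖G‖²‖A‖² − (Im⟨G,A⟩)²)`. -/
theorem stmt_4 {n : ℕ} (A G : Fin n → ℂ) (hAG : LinearIndependent ℂ ![A, G])
    (lam : ℝ)
    (hlam : lam = (cip G A).re +
      Real.sqrt ((cip G G).re * (cip A A).re - ((cip G A).im) ^ 2))
    (hpos : 0 < lam)
    (v : Fin n → ℂ)
    (hv : v = ((lam : ℂ) - cip G A) • G + (((cip G G).re : ℂ)) • A) :
    (dyadSum A G).mulVec v = (lam : ℂ) • v ∧
    (cip v v).re = 2 * lam * (cip G G).re *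
      Real.sqrt ((cip G G).re * (cip A A).re - ((cip G A).im) ^ 2) := by
  set c : ℂ := cip G A with hc
  set g : ℝ := (cip G G).re with hg
  set a : ℝ := (cip A A).re with ha
  set s : ℝ := Real.sqrt (g * a - c.im ^ 2) with hs
  -- Cauchy-Schwarz gives nonnegativity of the discriminant
  have hCS : Complex.normSq c ≤ g * a := cip_CS G A
  have hD : 0 ≤ g * a - c.im ^ 2 := by
    have := Complex.normSq_apply c
    nlinarith [sq_nonneg c.re]
  have hs2 : s ^ 2 = g * a - c.im ^ 2 := Real.sq_sqrt hD
  have hs0 : 0 ≤ s := Real.sqrt_nonneg _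
  -- real identity
  have hr : lam ^ 2 - 2 * lam * c.re + Complex.normSq c = g * a := by
    have hn : Complex.normSq c = c.re ^ 2 + c.im ^ 2 := by
      rw [Complex.normSq_apply]; ring
    rw [hlam] at *
    nlinarith [hs2]
  -- complex key identity
  have hGA : cip A G = star c := by rw [hc, cip_star]
  have key : ((lam : ℂ) - c) * (starRingEnd ℂ) c + (g : ℂ) * (a : ℂ) = (lam : ℂ) * ((lam : ℂ) - c) := by
    have h2 := congrArg (Complex.ofReal) hr
    push_cast at h2
    rw [show ((c.re : ℂ)) = (c + (starRingEnd ℂ) c) / 2 by rw [Complex.add_conj]; push_cast; ring,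
      show ((Complex.normSq c : ℂ)) = c * (starRingEnd ℂ) c by rw [Complex.mul_conj]] at h2
    linear_combination -h2
  -- inner products with v
  have hGG : cip G G = (g : ℂ) := cip_self_real G
  have hAA : cip A A = (a : ℂ) := cip_self_real A
  have hGv : cip G v = (lam : ℂ) * g := by
    rw [hv, cip_add_right, cip_smul_right, cip_smul_right, hGG, ← hc]
    ring
  have hAv : cip A v = (lam : ℂ) * ((lam : ℂ) - c) := by
    rw [hv, cip_add_right, cip_smul_right, cip_smul_right, hAA, hGA]
    rw [show (star c : ℂ) = (starRingEnd ℂ) c from rfl]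
    linear_combination key
  constructor
  · rw [dyad_mulVec, hGv, hAv, hv]
    funext i
    simp only [Pi.add_apply, Pi.smul_apply, smul_eq_mul]
    ring
  · have hvv : cip v v = ((2 * lam * g * s : ℝ) : ℂ) := by
      nth_rewrite 1 [hv]
      rw [cip_add_left, cip_smul_left, cip_smul_left, hGv, hAv]
      have hcc : c + (starRingEnd ℂ) c = (2 * c.re : ℂ) := by
        rw [Complex.add_conj]; push_cast; ring
      have hls : (lam : ℂ) - (c.re : ℂ) = (s : ℂ) := by
        rw [hlam]; push_cast; ring
      simp only [star_sub, star_mul', Complex.star_def, Complex.conj_ofReal]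
      push_cast
      linear_combination (-(lam : ℂ) * g) * hcc + (2 * (lam : ℂ) * g) * hls
    rw [hvv, Complex.ofReal_re]
end

section
/- Let A ∈ ℂ^n be nonzero and Γ ∈ ℂ^n with components Γ_i = J_i + iS_i (J_i, S_i real). Define G_i = Γ_i A_i, the weighted mean ⟨x⟩ = (∑_i x_i|A_i|²)/(∑_i |A_i|²) for x ∈ ℝ^n, Var(x) = ⟨x²⟩ − ⟨x⟩², and V(Γ) = √(⟨J⟩² + Var(J) + Var(S)). Then the two nonzero eigenvalues of χ = |A⟩⟨G| + |G⟩⟨A| are λ± = ‖A‖²(⟨J⟩ ± V(Γ)). -/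
open Matrix

/-- `‖A‖² = ∑ |A_i|²`. -/
noncomputable def nrmSq {n : ℕ} (A : Fin n → ℂ) : ℝ := ∑ i, Complex.normSq (A i)

/-- Weighted mean `⟨x⟩ = (∑ x_i |A_i|²)/(∑ |A_i|²)`. -/
noncomputable def wmean {n : ℕ} (A : Fin n → ℂ) (x : Fin n → ℝ) : ℝ :=
  (∑ i, x i * Complex.normSq (A i)) / nrmSq A

/-- `Var(x) = ⟨x²⟩ − ⟨x⟩²`. -/
noncomputable def wvar {n : ℕ} (A : Fin n → ℂ) (x : Fin n → ℝ) : ℝ :=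
  wmean A (fun i => x i ^ 2) - (wmean A x) ^ 2

/-- `V(Γ) = √(⟨J⟩² + Var(J) + Var(S))`. -/
noncomputable def vGamma {n : ℕ} (A Γ : Fin n → ℂ) : ℝ :=
  Real.sqrt ((wmean A fun i => (Γ i).re) ^ 2 +
    wvar A (fun i => (Γ i).re) + wvar A (fun i => (Γ i).im))

/-- With `G_i = Γ_i A_i`, the two nonzero eigenvalues of `χ = |A⟩⟨G| + |G⟩⟨A|` are
`λ± = ‖A‖²(⟨J⟩ ± V(Γ))`. -/
theorem stmt_11 {n : ℕ} (A Γ G : Fin n → ℂ) (hA : A ≠ 0)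
    (hG : ∀ i, G i = Γ i * A i) (hAG : LinearIndependent ℂ ![A, G]) :
    (∀ lam : ℝ,
      (lam = nrmSq A * ((wmean A fun i => (Γ i).re) + vGamma A Γ) ∨
       lam = nrmSq A * ((wmean A fun i => (Γ i).re) - vGamma A Γ)) →
      ∃ v : Fin n → ℂ, v ≠ 0 ∧ (dyadSum A G).mulVec v = (lam : ℂ) • v) ∧
    (∀ μ : ℂ, μ ≠ 0 → (∃ v : Fin n → ℂ, v ≠ 0 ∧ (dyadSum A G).mulVec v = μ • v) →
      (μ = ((nrmSq A * ((wmean A fun i => (Γ i).re) + vGamma A Γ) : ℝ) : ℂ) ∨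
       μ = ((nrmSq A * ((wmean A fun i => (Γ i).re) - vGamma A Γ) : ℝ) : ℂ))) := by
    classical
  set p : ℝ := nrmSq A with hpdef
  set r : ℝ := ∑ i, (Γ i).re * Complex.normSq (A i) with hrdef
  set m : ℝ := ∑ i, (Γ i).im * Complex.normSq (A i) with hmdef
  set q : ℝ := ∑ i, ((Γ i).re ^ 2 + (Γ i).im ^ 2) * Complex.normSq (A i) with hqdef
  have hp : 0 < p := by
    obtain ⟨i, hi⟩ : ∃ i, A i ≠ 0 := by
      by_contra h; push_neg at h; exact hA (funext fun i => h i)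
    exact Finset.sum_pos' (fun j _ => Complex.normSq_nonneg _)
      ⟨i, Finset.mem_univ i, Complex.normSq_pos.mpr hi⟩
  -- inner product identities
  have hAA : (∑ j, star (A j) * A j) = (p : ℂ) := by
    rw [hpdef, nrmSq, Complex.ofReal_sum]
    exact Finset.sum_congr rfl fun j _ => by
      rw [Complex.star_def, Complex.normSq_eq_conj_mul_self]
  have hGA : (∑ j, star (G j) * A j) = (r : ℂ) - (m : ℂ) * Complex.I := by
    have : ∀ j, star (G j) * A j =
        (((Γ j).re * Complex.normSq (A j) : ℝ) : ℂ)
          - (((Γ j).im * Complex.normSq (A j) : ℝ) : ℂ) * Complex.I := by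
      intro j
      rw [hG]
      apply Complex.ext <;>
        simp [Complex.mul_re, Complex.mul_im, Complex.normSq_apply] <;> ring
    rw [Finset.sum_congr rfl fun j _ => this j, Finset.sum_sub_distrib,
      ← Finset.sum_mul, ← Complex.ofReal_sum, ← Complex.ofReal_sum, hrdef, hmdef]
  have hAG' : (∑ j, star (A j) * G j) = (r : ℂ) + (m : ℂ) * Complex.I := by
    have : ∀ j, star (A j) * G j =
        (((Γ j).re * Complex.normSq (A j) : ℝ) : ℂ)
          + (((Γ j).im * Complex.normSq (A j) : ℝ) : ℂ) * Complex.I := by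
      intro j
      rw [hG]
      apply Complex.ext <;>
        simp [Complex.mul_re, Complex.mul_im, Complex.normSq_apply] <;> ring
    rw [Finset.sum_congr rfl fun j _ => this j, Finset.sum_add_distrib,
      ← Finset.sum_mul, ← Complex.ofReal_sum, ← Complex.ofReal_sum, hrdef, hmdef]
  have hGG : (∑ j, star (G j) * G j) = (q : ℂ) := by
    rw [hqdef, Complex.ofReal_sum]
    refine Finset.sum_congr rfl fun j _ => ?_
    rw [Complex.star_def, ← Complex.normSq_eq_conj_mul_self, hG, Complex.normSq_mul]
    norm_cast
    rw [Complex.normSq_apply]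
    ring
  -- mulVec formula
  have hmul : ∀ v : Fin n → ℂ, (dyadSum A G).mulVec v =
      fun i => (∑ j, star (G j) * v j) * A i + (∑ j, star (A j) * v j) * G i := by
    intro v; funext i
    simp only [dyadSum, Matrix.mulVec, dotProduct, Matrix.of_apply]
    have : ∀ j, (A i * star (G j) + G i * star (A j)) * v j
        = A i * (star (G j) * v j) + G i * (star (A j) * v j) := fun j => by ring
    rw [Finset.sum_congr rfl fun j _ => this j, Finset.sum_add_distrib,
      ← Finset.mul_sum, ← Finset.mul_sum]
    ring
  -- real facts
  have hCS : m ^ 2 ≤ p * q := by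
    have h1 := Finset.sum_mul_sq_le_sq_mul_sq Finset.univ
      (fun i => (Γ i).im * Real.sqrt (Complex.normSq (A i)))
      (fun i => Real.sqrt (Complex.normSq (A i)))
    have e1 : ∀ i : Fin n, ((Γ i).im * Real.sqrt (Complex.normSq (A i)))
        * Real.sqrt (Complex.normSq (A i)) = (Γ i).im * Complex.normSq (A i) := by
      intro i
      rw [mul_assoc, Real.mul_self_sqrt (Complex.normSq_nonneg _)]
    have e2 : ∀ i : Fin n, ((Γ i).im * Real.sqrt (Complex.normSq (A i))) ^ 2
        = (Γ i).im ^ 2 * Complex.normSq (A i) := by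
      intro i
      rw [mul_pow, Real.sq_sqrt (Complex.normSq_nonneg _)]
    have e3 : ∀ i : Fin n, (Real.sqrt (Complex.normSq (A i))) ^ 2
        = Complex.normSq (A i) := fun i => Real.sq_sqrt (Complex.normSq_nonneg _)
    rw [Finset.sum_congr rfl fun i _ => e1 i, Finset.sum_congr rfl fun i _ => e2 i,
      Finset.sum_congr rfl fun i _ => e3 i] at h1
    have hps : (∑ i, Complex.normSq (A i)) = p := rfl
    rw [← hmdef, hps] at h1
    have h2 : (∑ i, (Γ i).im ^ 2 * Complex.normSq (A i)) ≤ q := by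
      rw [hqdef]
      refine Finset.sum_le_sum fun i _ => ?_
      nlinarith [Complex.normSq_nonneg (A i), sq_nonneg ((Γ i).re)]
    have h3 : (0:ℝ) ≤ ∑ i, (Γ i).im ^ 2 * Complex.normSq (A i) :=
      Finset.sum_nonneg fun i _ => mul_nonneg (sq_nonneg _) (Complex.normSq_nonneg _)
    calc m ^ 2 ≤ (∑ i, (Γ i).im ^ 2 * Complex.normSq (A i)) * p := h1
      _ ≤ q * p := by nlinarith
      _ = p * q := mul_comm _ _
  have hD : (0:ℝ) ≤ p * q - m ^ 2 := by linarith
  have hwm : wmean A (fun i => (Γ i).re) = r / p := rfl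
  have hV : p * vGamma A Γ = Real.sqrt (p * q - m ^ 2) := by
    have hE : (wmean A fun i => (Γ i).re) ^ 2 + wvar A (fun i => (Γ i).re)
        + wvar A (fun i => (Γ i).im) = (p * q - m ^ 2) / p ^ 2 := by
      have hq' : q = (∑ i, (Γ i).re ^ 2 * Complex.normSq (A i))
          + (∑ i, (Γ i).im ^ 2 * Complex.normSq (A i)) := by
        rw [hqdef, ← Finset.sum_add_distrib]
        exact Finset.sum_congr rfl fun i _ => by ring
      simp only [wvar, wmean, ← hpdef, ← hrdef, ← hmdef]
      rw [div_pow, div_pow]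
      field_simp
      rw [hq']
      ring
    rw [vGamma, hE,
      show (p * q - m ^ 2) / p ^ 2 = (Real.sqrt (p * q - m ^ 2) / p) ^ 2 by
        rw [div_pow, Real.sq_sqrt hD],
      Real.sqrt_sq (by positivity)]
    field_simp
  have hV2 : (p * vGamma A Γ) ^ 2 = p * q - m ^ 2 := by
    rw [hV, Real.sq_sqrt hD]
  have hreal1 : nrmSq A * ((wmean A fun i => (Γ i).re) + vGamma A Γ)
      = r + p * vGamma A Γ := by
    rw [← hpdef, hwm, mul_add, mul_div_cancel₀ _ hp.ne']
  have hreal2 : nrmSq A * ((wmean A fun i => (Γ i).re) - vGamma A Γ)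
      = r - p * vGamma A Γ := by
    rw [← hpdef, hwm, mul_sub, mul_div_cancel₀ _ hp.ne']
  have hpC : (p : ℂ) ≠ 0 := Complex.ofReal_ne_zero.mpr hp.ne'
  constructor
  · -- existence of eigenvectors
    intro lam hlam
    rw [hreal1, hreal2] at hlam
    have hquad : (lam - r) ^ 2 = p * q - m ^ 2 := by
      rcases hlam with h | h <;> rw [h, ← hV2] <;> ring
    have hqc : lam ^ 2 - 2 * r * lam + (r ^ 2 + m ^ 2 - p * q) = 0 := by
      linear_combination hquad
    have hqcC : (lam : ℂ) ^ 2 - 2 * (r : ℂ) * (lam : ℂ)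
        + ((r : ℂ) ^ 2 + (m : ℂ) ^ 2 - (p : ℂ) * (q : ℂ)) = 0 := by
      have h0 : ((lam ^ 2 - 2 * r * lam + (r ^ 2 + m ^ 2 - p * q) : ℝ) : ℂ) = 0 := by
        rw [hqc, Complex.ofReal_zero]
      push_cast at h0
      linear_combination h0
    set c1 : ℂ := (lam : ℂ) - ((r : ℂ) + (m : ℂ) * Complex.I) with hc1
    refine ⟨fun i => c1 * A i + (p : ℂ) * G i, ?_, ?_⟩
    · intro h
      have hli := Fintype.linearIndependent_iff.mp hAG ![c1, (p : ℂ)]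
      have hsum : (∑ i : Fin 2, ![c1, (p : ℂ)] i • ![A, G] i) = 0 := by
        rw [Fin.sum_univ_two]
        simp only [Matrix.cons_val_zero, Matrix.cons_val_one, Matrix.head_cons]
        funext i
        have := congrFun h i
        simpa using this
      exact hpC (hli hsum 1)
    · rw [hmul]
      funext i
      simp only [Pi.smul_apply, smul_eq_mul]
      have hS1 : (∑ j, star (G j) * (c1 * A j + (p : ℂ) * G j))
          = c1 * ((r : ℂ) - (m : ℂ) * Complex.I) + (p : ℂ) * (q : ℂ) := by
        have e : ∀ j, star (G j) * (c1 * A j + (p : ℂ) * G j)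
            = c1 * (star (G j) * A j) + (p : ℂ) * (star (G j) * G j) := fun j => by ring
        rw [Finset.sum_congr rfl fun j _ => e j, Finset.sum_add_distrib,
          ← Finset.mul_sum, ← Finset.mul_sum, hGA, hGG]
      have hS2 : (∑ j, star (A j) * (c1 * A j + (p : ℂ) * G j))
          = c1 * (p : ℂ) + (p : ℂ) * ((r : ℂ) + (m : ℂ) * Complex.I) := by
        have e : ∀ j, star (A j) * (c1 * A j + (p : ℂ) * G j)
            = c1 * (star (A j) * A j) + (p : ℂ) * (star (A j) * G j) := fun j => by ring
        rw [Finset.sum_congr rfl fun j _ => e j, Finset.sum_add_distrib,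
          ← Finset.mul_sum, ← Finset.mul_sum, hAA, hAG']
      rw [hS1, hS2]
      have hco1 : c1 * ((r : ℂ) - (m : ℂ) * Complex.I) + (p : ℂ) * (q : ℂ)
          = (lam : ℂ) * c1 := by
        rw [hc1]
        linear_combination -hqcC + (m : ℂ) ^ 2 * Complex.I_sq
      have hco2 : c1 * (p : ℂ) + (p : ℂ) * ((r : ℂ) + (m : ℂ) * Complex.I)
          = (lam : ℂ) * (p : ℂ) := by
        rw [hc1]; ring
      linear_combination (A i) * hco1 + (G i) * hco2
  · -- uniqueness
    rintro μ hμ ⟨v, hv0, hev⟩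
    rw [hmul] at hev
    set s : ℂ := ∑ j, star (G j) * v j with hsdef
    set t : ℂ := ∑ j, star (A j) * v j with htdef
    have hev' : ∀ i, s * A i + t * G i = μ * v i := by
      intro i
      have := congrFun hev i
      simpa using this
    have e1 : μ * s = s * ((r : ℂ) - (m : ℂ) * Complex.I) + t * (q : ℂ) := by
      have h1 : μ * s = ∑ j, star (G j) * (s * A j + t * G j) := by
        rw [hsdef, Finset.mul_sum]
        exact Finset.sum_congr rfl fun j _ => by rw [hev' j]; ring
      have e : ∀ j, star (G j) * (s * A j + t * G j)
          = s * (star (G j) * A j) + t * (star (G j) * G j) := fun j => by ring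
      rw [h1, Finset.sum_congr rfl fun j _ => e j, Finset.sum_add_distrib,
        ← Finset.mul_sum, ← Finset.mul_sum, hGA, hGG]
    have e2 : μ * t = s * (p : ℂ) + t * ((r : ℂ) + (m : ℂ) * Complex.I) := by
      have h1 : μ * t = ∑ j, star (A j) * (s * A j + t * G j) := by
        rw [htdef, Finset.mul_sum]
        exact Finset.sum_congr rfl fun j _ => by rw [hev' j]; ring
      have e : ∀ j, star (A j) * (s * A j + t * G j)
          = s * (star (A j) * A j) + t * (star (A j) * G j) := fun j => by ring
      rw [h1, Finset.sum_congr rfl fun j _ => e j, Finset.sum_add_distrib,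
        ← Finset.mul_sum, ← Finset.mul_sum, hAA, hAG']
    have hGne : G ≠ 0 := by
      have := hAG.ne_zero 1
      simpa using this
    have hqpos : 0 < q := by
      obtain ⟨j, hj⟩ : ∃ j, G j ≠ 0 := by
        by_contra h; push_neg at h; exact hGne (funext fun j => h j)
      rw [hG] at hj
      have hΓ : Γ j ≠ 0 := fun h => hj (by simp [h])
      have hAj : A j ≠ 0 := fun h => hj (by simp [h])
      refine Finset.sum_pos' (fun i _ => mul_nonneg (by positivity) (Complex.normSq_nonneg _))
        ⟨j, Finset.mem_univ j, ?_⟩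
      have e : (Γ j).re ^ 2 + (Γ j).im ^ 2 = Complex.normSq (Γ j) := by
        rw [Complex.normSq_apply]; ring
      rw [e]
      exact mul_pos (Complex.normSq_pos.mpr hΓ) (Complex.normSq_pos.mpr hAj)
    have hqC : (q : ℂ) ≠ 0 := Complex.ofReal_ne_zero.mpr hqpos.ne'
    have ht : t ≠ 0 := by
      intro h
      rw [h, mul_zero, zero_mul, add_zero] at e2
      have hs0 : s = 0 := by
        rcases mul_eq_zero.mp e2.symm with h' | h'
        · exact h'
        · exact absurd h' hpC
      apply hv0
      funext i
      have := hev' i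
      rw [hs0, h, zero_mul, zero_mul, add_zero] at this
      rcases mul_eq_zero.mp this.symm with h' | h'
      · exact absurd h' hμ
      · exact h'
    have hs : s ≠ 0 := by
      intro h
      rw [h, mul_zero, zero_mul, zero_add] at e1
      rcases mul_eq_zero.mp e1.symm with h' | h'
      · exact ht h'
      · exact hqC h'
    have key : (μ - ((r : ℂ) - (m : ℂ) * Complex.I))
        * (μ - ((r : ℂ) + (m : ℂ) * Complex.I)) = (p : ℂ) * (q : ℂ) := by
      have h1 : s * (μ - ((r : ℂ) - (m : ℂ) * Complex.I)) = t * (q : ℂ) := by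
        linear_combination e1
      have h2 : t * (μ - ((r : ℂ) + (m : ℂ) * Complex.I)) = s * (p : ℂ) := by
        linear_combination e2
      have h3 : (s * t) * ((μ - ((r : ℂ) - (m : ℂ) * Complex.I))
          * (μ - ((r : ℂ) + (m : ℂ) * Complex.I))) = (s * t) * ((p : ℂ) * (q : ℂ)) := by
        linear_combination (t * (μ - ((r : ℂ) + (m : ℂ) * Complex.I))) * h1
          + t * (q : ℂ) * h2
      exact mul_left_cancel₀ (mul_ne_zero hs ht) h3
    have hv2C : ((p * vGamma A Γ : ℝ) : ℂ) ^ 2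
        = (p : ℂ) * (q : ℂ) - (m : ℂ) ^ 2 := by
      have h0 : (((p * vGamma A Γ) ^ 2 : ℝ) : ℂ) = ((p * q - m ^ 2 : ℝ) : ℂ) := by
        rw [hV2]
      push_cast at h0 ⊢
      linear_combination h0
    have hfac : (μ - ((r + p * vGamma A Γ : ℝ) : ℂ))
        * (μ - ((r - p * vGamma A Γ : ℝ) : ℂ)) = 0 := by
      push_cast at hv2C ⊢
      linear_combination key + (m : ℂ) ^ 2 * Complex.I_sq - hv2C
    rcases mul_eq_zero.mp hfac with h | h
    · left
      rw [hreal1]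
      exact sub_eq_zero.mp h
    · right
      rw [hreal2]
      exact sub_eq_zero.mp h
end
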